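/- arXiv:2506.23848 — 2 statements merged into one kernel-verified Lean document; each statement's English description precedes it below -/
import Mathlib

section
/- Let λ ∈ ℂ. For all k, p ∈ ℕ, φ(t^{k+p} (∏_{s=0}^{p−1}(1−q^{−2s}X)) X^k) = q^{p(λ+2k)} x^k y^p. Consequently φ : ℂ[t,tX] → ℂ[x,y] is a ℂ-linear isomorphism whose inverse sends x^k y^p to q^{−p(λ+2k)} t^{k+p} (∏_{s=0}^{p−1}(1−q^{−2s}X)) X^k. -/
noncomputable section

open Finset

def qnum (q x : ℂ) : ℂ := (q ^ x - q ^ (-x)) / (q - q⁻¹)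
def qfact (q : ℂ) (n : ℕ) : ℂ := ∏ s ∈ Finset.range n, qnum q ((s : ℂ) + 1)
def qbinom (q : ℂ) (n k : ℕ) : ℂ := qfact q n / (qfact q k * qfact q (n - k))

abbrev P2 : Type := (ℕ × ℕ) →₀ ℂ
def mono (k l : ℕ) : P2 := Finsupp.single (k, l) 1

/-- The Laurent polynomial ring ℂ[t^{±1}, X^{±1}] containing ℂ[t,X]. -/
abbrev L2 : Type := AddMonoidAlgebra ℂ (ℤ × ℤ)

def tL : L2 := AddMonoidAlgebra.single (1, 0) 1
def XL : L2 := AddMonoidAlgebra.single (0, 1) 1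
def tinv : L2 := AddMonoidAlgebra.single (-1, 0) 1
def Xinv : L2 := AddMonoidAlgebra.single (0, -1) 1

/-- Substitution t ↦ c·t: scales the monomial t^a X^b by c^a. -/
def scT (c : ℂ) : L2 →ₗ[ℂ] L2 :=
  (Finsupp.lsum ℂ fun ab : ℤ × ℤ => LinearMap.toSpanSingleton ℂ L2
    ((c ^ ab.1) • (AddMonoidAlgebra.single ab 1 : L2))) ∘ₗ
    (AddMonoidAlgebra.coeffLinearEquiv ℂ).toLinearMap

/-- Substitution X ↦ c·X: scales the monomial t^a X^b by c^b. -/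
def scX (c : ℂ) : L2 →ₗ[ℂ] L2 :=
  (Finsupp.lsum ℂ fun ab : ℤ × ℤ => LinearMap.toSpanSingleton ℂ L2
    ((c ^ ab.2) • (AddMonoidAlgebra.single ab 1 : L2))) ∘ₗ
    (AddMonoidAlgebra.coeffLinearEquiv ℂ).toLinearMap

/-- The subspace ℂ[t,tX] = span{t^a X^b : b ≤ a}. -/
def spanTX : Submodule ℂ L2 :=
  Submodule.span ℂ {p : L2 | ∃ a b : ℕ, b ≤ a ∧ p = tL ^ a * XL ^ b}

/-- The map φ : ℂ[t,tX] → ℂ[x,y],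
φ(t^a X^b) = Σ_{k=0}^{a−b} [a−b choose k] q^{(k+λ+2b)(a−b−k)} x^{k+b} y^{a−b−k}
(extended by zero outside ℂ[t,tX]). -/
def phi (q lam : ℂ) : L2 →ₗ[ℂ] P2 :=
  (Finsupp.lsum ℂ fun ab : ℤ × ℤ => LinearMap.toSpanSingleton ℂ P2
    (if 0 ≤ ab.2 ∧ ab.2 ≤ ab.1 then
      ∑ k ∈ Finset.range ((ab.1 - ab.2).toNat + 1),
        (qbinom q (ab.1 - ab.2).toNat k
            * q ^ (((k : ℂ) + lam + 2 * (ab.2.toNat : ℂ))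
                * (((ab.1 - ab.2).toNat : ℂ) - (k : ℂ))))
          • mono (k + ab.2.toNat) ((ab.1 - ab.2).toNat - k)
    else 0)) ∘ₗ
    (AddMonoidAlgebra.coeffLinearEquiv ℂ).toLinearMap


namespace PhiIso

variable {q : ℂ}

lemma qpow_ne (hq0 : q ≠ 0) (x : ℂ) : q ^ x ≠ 0 := by
  simp [Complex.cpow_eq_zero_iff, hq0]

lemma qpow_add (hq0 : q ≠ 0) (x y : ℂ) : q ^ (x+y) = q^x * q^y :=
  Complex.cpow_add _ _ hq0

lemma qnum_add (hq0 : q ≠ 0) (a b : ℂ) :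
    qnum q (a+b) = q^(-b) * qnum q a + q^a * qnum q b := by
  unfold qnum
  rw [← mul_div_assoc, ← mul_div_assoc, ← add_div]
  congr 1
  have ha := qpow_ne hq0 a
  have hb := qpow_ne hq0 b
  rw [neg_add, qpow_add hq0, qpow_add hq0, Complex.cpow_neg, Complex.cpow_neg]
  field_simp
  ring

lemma qsub_ne (hq0 : q ≠ 0) (hq : ∀ m : ℕ, 0 < m → q ^ m ≠ 1) : q - q⁻¹ ≠ 0 := by
  intro h
  have h2 : q^2 = 1 := by
    have := sub_eq_zero.mp h
    field_simp at this
    exact this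
  exact hq 2 (by norm_num) h2

lemma qnum_nat (hq0 : q ≠ 0) (n : ℕ) : qnum q (n:ℂ) = (q^n - (q^n)⁻¹)/(q - q⁻¹) := by
  rw [qnum, Complex.cpow_neg, Complex.cpow_natCast]

lemma qnum_ne (hq0 : q ≠ 0) (hq : ∀ m : ℕ, 0 < m → q ^ m ≠ 1) (n : ℕ) (hn : 0 < n) :
    qnum q (n:ℂ) ≠ 0 := by
  rw [qnum_nat hq0 n]
  apply div_ne_zero _ (qsub_ne hq0 hq)
  rw [sub_ne_zero]
  intro h
  have : (q^n)^2 = 1 := by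
    rw [sq]
    nth_rewrite 1 [h]
    simp [hq0]
  rw [← pow_mul] at this
  exact hq (n*2) (by omega) this

lemma qfact_succ (n : ℕ) : qfact q (n+1) = qfact q n * qnum q ((n:ℂ)+1) :=
  Finset.prod_range_succ _ _

lemma qfact_ne (hq0 : q ≠ 0) (hq : ∀ m : ℕ, 0 < m → q ^ m ≠ 1) (n : ℕ) : qfact q n ≠ 0 := by
  induction n with
  | zero => simp [qfact]
  | succ n ih =>
    rw [qfact_succ]
    refine mul_ne_zero ih ?_
    have := qnum_ne hq0 hq (n+1) (by omega)
    push_cast at this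
    exact this

lemma qbinom_zero (hq0 : q ≠ 0) (hq : ∀ m : ℕ, 0 < m → q ^ m ≠ 1) (n : ℕ) :
    qbinom q n 0 = 1 := by
  rw [qbinom]
  simp only [Nat.sub_zero]
  rw [show qfact q 0 = 1 by simp [qfact], one_mul, div_self (qfact_ne hq0 hq n)]

lemma qbinom_self (hq0 : q ≠ 0) (hq : ∀ m : ℕ, 0 < m → q ^ m ≠ 1) (n : ℕ) :
    qbinom q n n = 1 := by
  rw [qbinom]
  simp only [Nat.sub_self]
  rw [show qfact q 0 = 1 by simp [qfact], mul_one, div_self (qfact_ne hq0 hq n)]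

lemma pascal (hq0 : q ≠ 0) (hq : ∀ m : ℕ, 0 < m → q ^ m ≠ 1) (n k : ℕ)
    (h1 : 1 ≤ k) (h2 : k ≤ n) :
    qbinom q (n+1) k = q^(-(k:ℂ)) * qbinom q n k + q^((n:ℂ)+1-(k:ℂ)) * qbinom q n (k-1) := by
  obtain ⟨j, rfl⟩ : ∃ j, k = j + 1 := ⟨k - 1, by omega⟩
  obtain ⟨m, rfl⟩ : ∃ m, n = j + 1 + m := ⟨n - (j+1), by omega⟩
  have e0 : (↑(j+1+m):ℂ) + 1 = ((m:ℂ)+1) + ((j:ℂ)+1) := by push_cast; ring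
  have key : qnum q ((↑(j+1+m):ℂ)+1) =
      q^(-((j:ℂ)+1)) * qnum q ((m:ℂ)+1) + q^((m:ℂ)+1) * qnum q ((j:ℂ)+1) := by
    rw [e0, qnum_add hq0]
  have e1 : ((↑(j+1+m):ℂ)+1-(↑(j+1):ℂ)) = (m:ℂ)+1 := by push_cast; ring
  have e2 : (-(↑(j+1):ℂ)) = -((j:ℂ)+1) := by push_cast; ring
  rw [e1, e2]
  have s1 : j+1+m+1 - (j+1) = m+1 := by omega
  have s2 : j+1+m - (j+1) = m := by omega
  have s3 : j+1+m - j = m+1 := by omega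
  have s4 : j+1-1 = j := by omega
  unfold qbinom
  rw [s4, s1, s2, s3]
  have f1 : qfact q (j+1+m+1) = qfact q (j+1+m) * qnum q ((↑(j+1+m):ℂ)+1) := qfact_succ _
  have f2 : qfact q (j+1) = qfact q j * qnum q ((j:ℂ)+1) := qfact_succ _
  have f3 : qfact q (m+1) = qfact q m * qnum q ((m:ℂ)+1) := qfact_succ _
  rw [f1, f2, f3, key]
  have hJ := qfact_ne hq0 hq j
  have hM := qfact_ne hq0 hq m
  have hN := qfact_ne hq0 hq (j+1+m)
  have ha := qnum_ne hq0 hq (j+1) (by omega)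
  have hb := qnum_ne hq0 hq (m+1) (by omega)
  push_cast at ha hb
  field_simp


section L2lemmas
variable (q lam : ℂ)

lemma tL_def : tL = AddMonoidAlgebra.single ((1:ℤ),(0:ℤ)) (1:ℂ) := rfl
lemma XL_def : XL = AddMonoidAlgebra.single ((0:ℤ),(1:ℤ)) (1:ℂ) := rfl

lemma tXpow (a b : ℕ) : tL ^ a * XL ^ b = AddMonoidAlgebra.single ((a:ℤ),(b:ℤ)) 1 := by
  rw [tL_def, XL_def, AddMonoidAlgebra.single_pow, AddMonoidAlgebra.single_pow,
    AddMonoidAlgebra.single_mul_single]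
  norm_num

def coefA (b n k : ℕ) : ℂ :=
  qbinom q n k * q ^ (((k:ℂ) + lam + 2*(b:ℂ)) * ((n:ℂ) - (k:ℂ)))

lemma phi_single (ab : ℤ × ℤ) (r : ℂ) :
    phi q lam (AddMonoidAlgebra.single ab r) = r • (if 0 ≤ ab.2 ∧ ab.2 ≤ ab.1 then
      ∑ k ∈ Finset.range ((ab.1 - ab.2).toNat + 1),
        (qbinom q (ab.1 - ab.2).toNat k
            * q ^ (((k : ℂ) + lam + 2 * (ab.2.toNat : ℂ))
                * (((ab.1 - ab.2).toNat : ℂ) - (k : ℂ))))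
          • mono (k + ab.2.toNat) ((ab.1 - ab.2).toNat - k)
    else 0) := by
  rw [phi, LinearMap.comp_apply]
  erw [Finsupp.lsum_single, LinearMap.toSpanSingleton_apply]

lemma phi_tX (a b : ℕ) (h : b ≤ a) :
    phi q lam (tL ^ a * XL ^ b)
      = ∑ k ∈ Finset.range (a - b + 1), coefA q lam b (a-b) k • mono (k+b) (a-b-k) := by
  rw [tXpow, phi_single]
  have h1 : ((a:ℤ) - (b:ℤ)).toNat = a - b := by omega
  have h2 : ((b:ℤ)).toNat = b := by omega
  rw [if_pos (by constructor <;> omega)]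
  simp only [h1, h2, one_smul, coefA]

def yL : P2 →ₗ[ℂ] P2 :=
  Finsupp.lsum ℂ fun kl => LinearMap.toSpanSingleton ℂ P2 (mono kl.1 (kl.2+1))

lemma yL_single (kl : ℕ × ℕ) (r : ℂ) :
    yL (Finsupp.single kl r) = r • mono kl.1 (kl.2+1) := by
  rw [yL]
  erw [Finsupp.lsum_single, LinearMap.toSpanSingleton_apply]

lemma yL_mono (k l : ℕ) : yL (mono k l) = mono k (l+1) := by
  rw [mono, yL_single, one_smul]

lemma scX_single (c : ℂ) (ab : ℤ × ℤ) (r : ℂ) :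
    scX c (AddMonoidAlgebra.single ab r) = AddMonoidAlgebra.single ab (c ^ ab.2 * r) := by
  rw [scX, LinearMap.comp_apply]
  erw [Finsupp.lsum_single, LinearMap.toSpanSingleton_apply]
  rw [smul_smul]
  rw [AddMonoidAlgebra.smul_single', mul_one, mul_comm]

lemma scX_mul (c : ℂ) (hc : c ≠ 0) (u v : L2) :
    scX c (u * v) = scX c u * scX c v := by
  induction u using AddMonoidAlgebra.induction_linear with
  | zero => simp
  | add f g hf hg => rw [add_mul, map_add, hf, hg, map_add, add_mul]
  | single a r =>
    induction v using AddMonoidAlgebra.induction_linear with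
    | zero => simp
    | add f g hf hg => rw [mul_add, map_add, hf, hg, map_add, mul_add]
    | single b s =>
      show scX c (AddMonoidAlgebra.single a r * AddMonoidAlgebra.single b s) = _
      rw [AddMonoidAlgebra.single_mul_single, scX_single, scX_single, scX_single,
        AddMonoidAlgebra.single_mul_single]
      congr 1
      rw [Prod.snd_add, zpow_add₀ hc]
      ring

lemma scX_scX (c d : ℂ) (u : L2) : scX c (scX d u) = scX (c*d) u := by
  induction u using AddMonoidAlgebra.induction_linear with
  | zero => simp
  | add f g hf hg => simp only [map_add, hf, hg]
  | single a r =>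
    show scX c (scX d (AddMonoidAlgebra.single a r)) = scX (c*d) (AddMonoidAlgebra.single a r)
    rw [scX_single, scX_single, scX_single, mul_zpow]
    ring_nf

lemma scX_one_eq (u : L2) : scX 1 u = u := by
  induction u using AddMonoidAlgebra.induction_linear with
  | zero => simp
  | add f g hf hg => rw [map_add, hf, hg]
  | single a r =>
    show scX 1 (AddMonoidAlgebra.single a r) = _
    rw [scX_single, one_zpow, one_mul]

end L2lemmas


section Key
variable {q : ℂ} (lam : ℂ)

lemma key_mono (hq0 : q ≠ 0) (hq : ∀ m : ℕ, 0 < m → q ^ m ≠ 1) (b n : ℕ) :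
    phi q lam (tL^(b+n+1) * XL^b) - phi q lam (tL^(b+n+1) * XL^(b+1))
      = (q ^ (lam + 2*(b:ℂ))) • yL (phi q lam (tL^(b+n) * XL^b)) := by
  rw [phi_tX q lam (b+n+1) b (by omega), phi_tX q lam (b+n+1) (b+1) (by omega),
      phi_tX q lam (b+n) b (by omega)]
  have e1 : b+n+1-b = n+1 := by omega
  have e2 : b+n+1-(b+1) = n := by omega
  have e3 : b+n-b = n := by omega
  rw [e1, e2, e3, map_sum, Finset.smul_sum]
  set h : ℕ → P2 := fun j => (if j = 0 then (0:ℂ) else coefA q lam (b+1) n (j-1)) • mono (j+b) (n+1-j) with hh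
  have hsum2 : (∑ k ∈ Finset.range (n+1), coefA q lam (b+1) n k • mono (k+(b+1)) (n-k))
      = ∑ j ∈ Finset.range (n+1+1), h j := by
    rw [Finset.sum_range_succ' h (n+1)]
    have h0 : h 0 = 0 := by simp [hh]
    rw [h0, add_zero]
    refine (Finset.sum_congr rfl fun i hi => ?_).symm
    simp only [hh, Nat.succ_ne_zero, if_false, Nat.add_sub_cancel]
    have e4 : i+1+b = i+(b+1) := by omega
    have e5 : n+1-(i+1) = n-i := by omega
    rw [e4, e5]
  rw [hsum2, ← Finset.sum_sub_distrib, Finset.sum_range_succ]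
  have htop : coefA q lam b (n+1) (n+1) • mono ((n+1)+b) (n+1-(n+1)) - h (n+1) = 0 := by
    simp only [hh, Nat.succ_ne_zero, if_false, Nat.add_sub_cancel]
    have c1 : coefA q lam b (n+1) (n+1) = 1 := by
      rw [coefA, qbinom_self hq0 hq, one_mul, sub_self, mul_zero, Complex.cpow_zero]
    have c2 : coefA q lam (b+1) n n = 1 := by
      rw [coefA, qbinom_self hq0 hq, one_mul, sub_self, mul_zero, Complex.cpow_zero]
    rw [c1, c2, sub_self]
  rw [htop, add_zero]
  refine Finset.sum_congr rfl fun k hk => ?_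
  have hkn : k ≤ n := Nat.lt_succ_iff.mp (Finset.mem_range.mp hk)
  simp only [map_smul, yL_mono, hh]
  rcases Nat.eq_zero_or_pos k with rfl | hk1
  · rw [if_pos rfl, zero_smul, sub_zero, smul_smul, show n+1-0 = n-0+1 by omega]
    have fact : coefA q lam b (n+1) 0 = q ^ (lam + 2*(b:ℂ)) * coefA q lam b n 0 := by
      rw [coefA, coefA]
      simp only [qbinom_zero hq0 hq, one_mul]
      rw [← qpow_add hq0]
      congr 1
      push_cast
      ring
    rw [fact]
  · have hk0 : k ≠ 0 := by omega
    simp only [if_neg hk0]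
    have e6 : n+1-k = n-k+1 := by omega
    rw [e6, ← sub_smul, smul_smul]
    congr 1
    simp only [coefA]
    rw [pascal hq0 hq n k hk1 hkn]
    have fact1 : q ^ (-(k:ℂ)) * q ^ (((k:ℂ)+lam+2*(b:ℂ))*((↑(n+1):ℂ)-(k:ℂ)))
        = q ^ (lam + 2*(b:ℂ)) * q ^ (((k:ℂ)+lam+2*(b:ℂ))*((n:ℂ)-(k:ℂ))) := by
      rw [← qpow_add hq0, ← qpow_add hq0]
      congr 1
      push_cast
      ring
    have fact2 : q ^ ((n:ℂ)+1-(k:ℂ)) * q ^ (((k:ℂ)+lam+2*(b:ℂ))*((↑(n+1):ℂ)-(k:ℂ)))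
        = q ^ ((((k-1:ℕ):ℂ)+lam+2*((b+1:ℕ):ℂ)) * ((n:ℂ)-((k-1:ℕ):ℂ))) := by
      rw [← qpow_add hq0]
      congr 1
      push_cast [Nat.cast_sub hk1]
      ring
    linear_combination (qbinom q n k) * fact1 + (qbinom q n (k-1)) * fact2

end Key


section Main
variable {q : ℂ} (lam : ℂ)

lemma single_smul_eq (ab : ℤ × ℤ) (c : ℂ) :
    AddMonoidAlgebra.single ab c = c • AddMonoidAlgebra.single ab (1:ℂ) := by
  rw [AddMonoidAlgebra.smul_single', mul_one]

lemma scX_one (c : ℂ) : scX c (1 : L2) = 1 := by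
  show scX c (AddMonoidAlgebra.single 0 1) = AddMonoidAlgebra.single 0 1
  rw [scX_single]
  norm_num

lemma scX_XL (c : ℂ) : scX c XL = c • XL := by
  rw [XL_def, scX_single]
  rw [single_smul_eq]
  norm_num

lemma scX_prod (c : ℂ) (hc : c ≠ 0) (n : ℕ) (f : ℕ → L2) :
    scX c (∏ s ∈ Finset.range n, f s) = ∏ s ∈ Finset.range n, scX c (f s) := by
  induction n with
  | zero => simpa using scX_one c
  | succ n ih => rw [Finset.prod_range_succ, Finset.prod_range_succ, scX_mul c hc, ih]

lemma tpow_single (a : ℕ) : tL ^ a = AddMonoidAlgebra.single ((a:ℤ), (0:ℤ)) 1 := by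
  have := tXpow a 0
  rwa [pow_zero, mul_one] at this

lemma Xpow_single (b : ℕ) : XL ^ b = AddMonoidAlgebra.single ((0:ℤ), (b:ℤ)) 1 := by
  have := tXpow 0 b
  rwa [pow_zero, one_mul] at this

lemma ring_split (a b : ℕ) : tL * (1 - XL) * (tL^a * XL^b)
    = tL^(a+1) * XL^b - tL^(a+1) * XL^(b+1) := by ring

lemma LR (hq0 : q ≠ 0) (hq : ∀ m : ℕ, 0 < m → q ^ m ≠ 1) (u : L2) (hu : u ∈ spanTX) :
    phi q lam (tL * (1 - XL) * u) = (q ^ lam) • yL (phi q lam (scX (q^2) u)) := by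
  have hu' : u ∈ Submodule.span ℂ {p : L2 | ∃ a b : ℕ, b ≤ a ∧ p = tL ^ a * XL ^ b} := hu
  clear hu
  induction hu' using Submodule.span_induction with
  | mem x hx =>
    obtain ⟨a, b, hba, rfl⟩ := hx
    obtain ⟨n, rfl⟩ : ∃ n, a = b + n := ⟨a - b, by omega⟩
    have hX : scX (q^2) (tL^(b+n) * XL^b) = (((q:ℂ)^2)^((b:ℕ):ℤ)) • (tL^(b+n) * XL^b) := by
      rw [tXpow, scX_single, mul_one]
      exact single_smul_eq _ _
    rw [ring_split, map_sub, key_mono lam hq0 hq b n, hX, map_smul, map_smul, smul_smul]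
    congr 1
    rw [zpow_natCast, ← pow_mul, ← Complex.cpow_natCast q (2*b), ← qpow_add hq0]
    congr 1
    push_cast
    ring
  | zero => simp
  | add x y hx hy ihx ihy =>
    rw [mul_add, map_add, ihx, ihy, map_add, map_add, map_add, smul_add]
  | smul c x hx ih =>
    rw [mul_smul_comm, map_smul, ih, map_smul, map_smul, map_smul, smul_comm]

lemma memTX (c : ℕ → ℂ) (m : ℕ) : ∀ (p k : ℕ), k + p ≤ m →
    tL^m * (∏ s ∈ Finset.range p, (1 - c s • XL)) * XL^k ∈ spanTX := by
  have hsmul : ∀ (r : ℂ) (v : L2), r • v = (r • (1:L2)) * v := fun r v => by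
    rw [smul_mul_assoc, one_mul]
  intro p
  induction p with
  | zero =>
    intro k hk
    rw [Finset.prod_range_zero, mul_one]
    exact Submodule.subset_span ⟨m, k, by omega, rfl⟩
  | succ p ih =>
    intro k hk
    rw [Finset.prod_range_succ]
    have expand : tL^m * ((∏ s ∈ Finset.range p, (1 - c s • XL)) * (1 - c p • XL)) * XL^k
        = (tL^m * (∏ s ∈ Finset.range p, (1 - c s • XL)) * XL^k)
          - c p • (tL^m * (∏ s ∈ Finset.range p, (1 - c s • XL)) * XL^(k+1)) := by
      rw [hsmul (c p) XL, hsmul (c p) (tL^m * (∏ s ∈ Finset.range p, (1 - c s • XL)) * XL^(k+1))]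
      ring
    rw [expand]
    exact sub_mem (ih k (by omega)) (Submodule.smul_mem _ _ (ih (k+1) (by omega)))

lemma expand_prod (hq0 : q ≠ 0) (p : ℕ) : ∃ c : ℕ → ℂ, c 0 = 1 ∧
    (∏ s ∈ Finset.range p, (1 - (q ^ (-2*(s:ℤ))) • XL)) = ∑ j ∈ Finset.range (p+1), c j • XL ^ j := by
  induction p with
  | zero => exact ⟨fun _ => 1, rfl, by simp⟩
  | succ p ih =>
    obtain ⟨c, hc0, hc⟩ := ih
    set a : ℂ := q ^ (-2*((p:ℕ):ℤ)) with ha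
    refine ⟨fun j => (if j ≤ p then c j else 0) - (if j = 0 then 0 else c (j-1) * a),
      by simp [hc0], ?_⟩
    rw [Finset.prod_range_succ, hc, mul_sub, mul_one, Finset.sum_mul]
    have t1 : ∀ j, (c j • XL ^ j) * (a • XL) = (c j * a) • XL^(j+1) := by
      intro j
      rw [smul_mul_assoc, mul_smul_comm, smul_smul, pow_succ]
    simp only [sub_smul]
    rw [Finset.sum_sub_distrib]
    congr 1
    · rw [Finset.sum_range_succ (fun x => (if x ≤ p then c x else 0) • XL ^ x) (p+1),
        if_neg (by omega : ¬ p+1 ≤ p), zero_smul, add_zero]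
      exact (Finset.sum_congr rfl fun j hj =>
        by rw [if_pos (by have := Finset.mem_range.mp hj; omega : j ≤ p)]).symm
    · rw [Finset.sum_range_succ' (fun j => (if j = 0 then (0:ℂ) else c (j-1) * a) • XL ^ j) (p+1)]
      rw [show ((if (0:ℕ) = 0 then (0:ℂ) else c (0-1) * a) • XL ^ 0) = 0 by simp, add_zero]
      refine Finset.sum_congr rfl fun j hj => ?_
      rw [if_neg (Nat.succ_ne_zero j), Nat.add_sub_cancel, t1 j]

lemma part1 (hq0 : q ≠ 0) (hq : ∀ m : ℕ, 0 < m → q ^ m ≠ 1) : ∀ (p k : ℕ),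
    phi q lam (tL ^ (k + p) * (∏ s ∈ Finset.range p, (1 - (q ^ (-2*(s:ℤ))) • XL)) * XL ^ k)
      = (q ^ ((p:ℂ) * (lam + 2*(k:ℂ)))) • mono k p := by
  intro p
  induction p with
  | zero =>
    intro k
    rw [Finset.prod_range_zero, mul_one, phi_tX q lam (k+0) k (by omega)]
    have e : k+0-k = 0 := by omega
    rw [e, Finset.sum_range_one]
    have c1 : coefA q lam k 0 0 = 1 := by
      rw [coefA, sub_self, mul_zero, Complex.cpow_zero, mul_one]
      simp [qbinom, qfact]
    rw [c1, one_smul, Nat.cast_zero, zero_mul, Complex.cpow_zero, one_smul]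
    norm_num
  | succ p ih =>
    intro k
    have f0 : (1 - (q ^ (-2*((0:ℕ):ℤ))) • XL) = 1 - XL := by norm_num
    have split : tL ^ (k+(p+1)) * (∏ s ∈ Finset.range (p+1), (1 - (q ^ (-2*(s:ℤ))) • XL)) * XL ^ k
        = tL * (1 - XL) * (tL ^ (k+p) * (∏ s ∈ Finset.range p, (1 - (q ^ (-2*((s:ℕ)+1:ℤ))) • XL)) * XL ^ k) := by
      rw [Finset.prod_range_succ' (fun s => (1 - (q ^ (-2*(s:ℤ))) • XL)) p]
      push_cast
      simp only [mul_zero, neg_zero, zpow_zero, one_smul]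
      ring
    rw [split]
    have hW : (tL ^ (k+p) * (∏ s ∈ Finset.range p, (1 - (q ^ (-2*((s:ℕ)+1:ℤ))) • XL)) * XL ^ k) ∈ spanTX :=
      memTX _ _ p k le_rfl
    rw [LR lam hq0 hq _ hW]
    have h2 : (q:ℂ)^2 ≠ 0 := pow_ne_zero _ hq0
    have hsc : scX (q^2) (tL ^ (k+p) * (∏ s ∈ Finset.range p, (1 - (q ^ (-2*((s:ℕ)+1:ℤ))) • XL)) * XL ^ k)
        = ((q:ℂ)^2)^((k:ℕ):ℤ) • (tL ^ (k+p) * (∏ s ∈ Finset.range p, (1 - (q ^ (-2*(s:ℤ))) • XL)) * XL ^ k) := by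
      rw [scX_mul _ h2, scX_mul _ h2, scX_prod _ h2]
      have p1 : scX (q^2) (tL ^ (k+p)) = tL^(k+p) := by
        rw [tpow_single, scX_single]
        norm_num
      have p2 : ∀ s : ℕ, scX (q^2) (1 - (q ^ (-2*((s:ℕ)+1:ℤ))) • XL) = 1 - (q ^ (-2*(s:ℤ))) • XL := by
        intro s
        rw [map_sub, map_smul, scX_one, scX_XL, smul_smul]
        congr 2
        rw [← zpow_natCast q 2, ← zpow_add₀ hq0]
        congr 1
        ring
      have p3 : scX (q^2) (XL ^ k) = ((q:ℂ)^2)^((k:ℕ):ℤ) • XL ^ k := by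
        rw [Xpow_single, scX_single, single_smul_eq]
        norm_num
      rw [p1, p3]
      rw [Finset.prod_congr rfl fun s _ => p2 s]
      rw [mul_smul_comm]
    rw [hsc, map_smul, ih k, map_smul, map_smul, yL_mono, smul_smul, smul_smul]
    congr 1
    rw [zpow_natCast, ← pow_mul, ← Complex.cpow_natCast q (2*k), ← qpow_add hq0, ← qpow_add hq0]
    congr 1
    push_cast
    ring

def psi (q lam : ℂ) : P2 →ₗ[ℂ] L2 :=
  Finsupp.lsum ℂ fun kp => LinearMap.toSpanSingleton ℂ L2
    ((q ^ (-(kp.2:ℂ) * (lam + 2*(kp.1:ℂ)))) •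
      (tL ^ (kp.1 + kp.2) * (∏ s ∈ Finset.range kp.2, (1 - (q ^ (-2*(s:ℤ))) • XL)) * XL ^ kp.1))

lemma psi_single (kp : ℕ × ℕ) (r : ℂ) :
    psi q lam (Finsupp.single kp r) = r • ((q ^ (-(kp.2:ℂ) * (lam + 2*(kp.1:ℂ)))) •
      (tL ^ (kp.1 + kp.2) * (∏ s ∈ Finset.range kp.2, (1 - (q ^ (-2*(s:ℤ))) • XL)) * XL ^ kp.1)) := by
  rw [psi]
  erw [Finsupp.lsum_single, LinearMap.toSpanSingleton_apply]

lemma phi_psi (hq0 : q ≠ 0) (hq : ∀ m : ℕ, 0 < m → q ^ m ≠ 1) (w : P2) :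
    phi q lam (psi q lam w) = w := by
  induction w using Finsupp.induction_linear with
  | zero => simp
  | add f g hf hg => rw [map_add, map_add, hf, hg]
  | single kp r =>
    rw [psi_single, map_smul, map_smul, part1 lam hq0 hq kp.2 kp.1, smul_smul, smul_smul,
      mul_assoc, ← qpow_add hq0,
      show (-(kp.2:ℂ) * (lam + 2*(kp.1:ℂ)) + (kp.2:ℂ) * (lam + 2*(kp.1:ℂ))) = 0 by ring,
      Complex.cpow_zero, mul_one, mono]
    show r • Finsupp.single kp 1 = _
    rw [Finsupp.smul_single, smul_eq_mul, mul_one]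

lemma psi_mem (hq0 : q ≠ 0) (w : P2) : psi q lam w ∈ spanTX := by
  induction w using Finsupp.induction_linear with
  | zero => simp
  | add f g hf hg => rw [map_add]; exact add_mem hf hg
  | single kp r =>
    rw [psi_single]
    exact Submodule.smul_mem _ _ (Submodule.smul_mem _ _ (memTX _ _ _ _ le_rfl))

end Main


section Final
variable {q : ℂ} (lam : ℂ)

lemma claimC (hq0 : q ≠ 0) (hq : ∀ m : ℕ, 0 < m → q ^ m ≠ 1) :
    ∀ n b : ℕ, (tL^(b+n) * XL^b) ∈ LinearMap.range (psi q lam) := by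
  intro n
  induction n using Nat.strong_induction_on with
  | _ n IH =>
  intro b
  obtain ⟨c, hc0, hc⟩ := expand_prod hq0 n
  have hF : tL^(b+n) * (∏ s ∈ Finset.range n, (1 - (q ^ (-2*(s:ℤ))) • XL)) * XL^b
      = ∑ j ∈ Finset.range (n+1), c j • (tL^(b+n) * XL^(b+j)) := by
    rw [hc, Finset.mul_sum, Finset.sum_mul]
    refine Finset.sum_congr rfl fun j hj => ?_
    rw [mul_smul_comm, smul_mul_assoc, pow_add]
    ring_nf
  rw [Finset.sum_range_succ' (fun j => c j • (tL^(b+n) * XL^(b+j))) n] at hF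
  have hFmem : tL^(b+n) * (∏ s ∈ Finset.range n, (1 - (q ^ (-2*(s:ℤ))) • XL)) * XL^b
      ∈ LinearMap.range (psi q lam) := by
    refine ⟨Finsupp.single (b, n) (q ^ ((n:ℂ) * (lam + 2*(b:ℂ)))), ?_⟩
    rw [psi_single, smul_smul, ← qpow_add hq0,
      show ((n:ℂ) * (lam + 2*(b:ℂ)) + -(n:ℂ) * (lam + 2*(b:ℂ))) = 0 by ring,
      Complex.cpow_zero, one_smul]
  have hEq : tL^(b+n) * XL^b
      = (tL^(b+n) * (∏ s ∈ Finset.range n, (1 - (q ^ (-2*(s:ℤ))) • XL)) * XL^b)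
        - ∑ i ∈ Finset.range n, c (i+1) • (tL^(b+n) * XL^(b+(i+1))) := by
    rw [hF, hc0]
    simp only [one_smul, Nat.add_zero]
    abel
  rw [hEq]
  refine sub_mem hFmem (Submodule.sum_mem _ fun i hi => Submodule.smul_mem _ _ ?_)
  have hi' := Finset.mem_range.mp hi
  have e : b+n = (b+(i+1))+(n-(i+1)) := by omega
  rw [e]
  exact IH (n-(i+1)) (by omega) (b+(i+1))

lemma spanle (hq0 : q ≠ 0) (hq : ∀ m : ℕ, 0 < m → q ^ m ≠ 1) :
    spanTX ≤ LinearMap.range (psi q lam) := by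
  refine Submodule.span_le.mpr ?_
  rintro x ⟨a, b, hba, rfl⟩
  obtain ⟨n, rfl⟩ : ∃ n, a = b + n := ⟨a - b, by omega⟩
  exact claimC lam hq0 hq n b

end Final
end PhiIso

open PhiIso in
/-- **The linear isomorphism φ : ℂ[t,tX] → ℂ[x,y]** (Lemma 3.5).
For all k, p: φ(t^{k+p} ∏_{s=0}^{p−1}(1−q^{−2s}X) X^k) = q^{p(λ+2k)} x^k y^p;
consequently φ restricted to ℂ[t,tX] is a linear isomorphism onto ℂ[x,y] whose
inverse sends x^k y^p to q^{−p(λ+2k)} t^{k+p} ∏_{s=0}^{p−1}(1−q^{−2s}X) X^k. -/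
theorem phi_isomorphism (q : ℂ) (hq0 : q ≠ 0)
    (hq : ∀ m : ℕ, 0 < m → q ^ m ≠ 1) (lam : ℂ) :
    (∀ k p : ℕ,
      phi q lam (tL ^ (k + p)
          * (∏ s ∈ Finset.range p, (1 - (q ^ (-2 * (s : ℤ))) • XL)) * XL ^ k)
        = (q ^ ((p : ℂ) * (lam + 2 * (k : ℂ)))) • mono k p) ∧
    Function.Bijective ((phi q lam).domRestrict spanTX) ∧
    (∀ k p : ℕ,
      (tL ^ (k + p) * (∏ s ∈ Finset.range p, (1 - (q ^ (-2 * (s : ℤ))) • XL)) * XL ^ k)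
          ∈ spanTX ∧
      phi q lam ((q ^ (-(p : ℂ) * (lam + 2 * (k : ℂ)))) •
          (tL ^ (k + p) * (∏ s ∈ Finset.range p, (1 - (q ^ (-2 * (s : ℤ))) • XL)) * XL ^ k))
        = mono k p) := by
  refine ⟨fun k p => part1 lam hq0 hq p k, ⟨?_, ?_⟩, fun k p => ⟨memTX _ _ p k le_rfl, ?_⟩⟩
  · intro u1 u2 h12
    simp only [LinearMap.domRestrict_apply] at h12
    obtain ⟨w1, hw1⟩ := spanle lam hq0 hq u1.2
    obtain ⟨w2, hw2⟩ := spanle lam hq0 hq u2.2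
    have e1 : w1 = phi q lam ↑u1 := by rw [← hw1, phi_psi lam hq0 hq]
    have e2 : w2 = phi q lam ↑u2 := by rw [← hw2, phi_psi lam hq0 hq]
    apply Subtype.ext
    rw [← hw1, ← hw2, e1, e2, h12]
  · intro w
    exact ⟨⟨psi q lam w, psi_mem lam hq0 w⟩, by
      rw [LinearMap.domRestrict_apply]; exact phi_psi lam hq0 hq w⟩
  · rw [map_smul, part1 lam hq0 hq p k, smul_smul, ← qpow_add hq0,
      show (-(p:ℂ) * (lam + 2*(k:ℂ)) + (p:ℂ) * (lam + 2*(k:ℂ))) = 0 by ring,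
      Complex.cpow_zero, one_smul]
end
end

section
/- Let λ, λ' ∈ ℂ with λ ∉ ℤ, λ' ∉ ℤ and λ+λ' ∉ ℤ, and set α = λ−1, β = λ'−1. Then for every N ∈ ℕ and every 0 ≤ k ≤ N, the little q-Jacobi polynomial has the expansion j_k^{λ−1,λ'−1}(X) = Σ_{l=0}^N [N choose l]_q q^{−l(N−l)} Q_k^{(N)}(q^{−2l}) (∏_{s=0}^{N−l−1}(1−q^{−2s}X)) X^l, an identity in ℂ[X] valid for every N ≥ k. -/
noncomputable section

open Finset Polynomial

/-- `[x]_n = ∏_{s=0}^{n-1} [x+s]`. -/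
def qpoch (q x : ℂ) (n : ℕ) : ℂ := ∏ s ∈ Finset.range n, qnum q (x + s)

/-- The little `q`-Jacobi polynomial
`j_n^{α,β}(X) = Σ_{k=0}^n ([−n]_k [n+α+β+1]_k q^{k(β+1)} / ([α+1]_k [k]!)) X^k`. -/
def jlittle (q a b : ℂ) (n : ℕ) : Polynomial ℂ :=
  ∑ k ∈ Finset.range (n + 1),
    Polynomial.C (qpoch q (-(n : ℂ)) k * qpoch q ((n : ℂ) + a + b + 1) k
        * q ^ ((k : ℂ) * (b + 1)) / (qpoch q (a + 1) k * qfact q k))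
      * Polynomial.X ^ k
/-- The q-Hahn polynomial value
Q_k^{(N)}(q^{−2l}) = Σ_{i=0}^k [k choose i] q^{i(β+1+N−l)} (−1)^i
[k+α+β+1]_i [−l]_i / ([α+1]_i [−N]_i). -/
def qHahn (q a b : ℂ) (N k l : ℕ) : ℂ :=
  ∑ i ∈ Finset.range (k + 1),
    qbinom q k i * q ^ ((i : ℂ) * (b + 1 + (N : ℂ) - (l : ℂ))) * (-1) ^ i
      * qpoch q ((k : ℂ) + a + b + 1) i * qpoch q (-(l : ℂ)) i
      / (qpoch q (a + 1) i * qpoch q (-(N : ℂ)) i)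

namespace QJ

def zq (q : ℂ) (m : ℤ) : ℂ := (q ^ m - q ^ (-m)) / (q - q⁻¹)

def zpoch (q : ℂ) (x : ℤ) (n : ℕ) : ℂ := ∏ s ∈ Finset.range n, zq q (x + s)

def zfact (q : ℂ) (n : ℕ) : ℂ := ∏ s ∈ Finset.range n, zq q ((s : ℤ) + 1)

variable {q : ℂ}

lemma zq_zero : zq q 0 = 0 := by simp [zq]

lemma zq_add (hq0 : q ≠ 0) (a b : ℤ) :
    zq q (a + b) = q ^ b * zq q a + q ^ (-a) * zq q b := by
  simp only [zq, mul_div_assoc', neg_add, zpow_add₀ hq0]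
  rw [← add_div]
  congr 1
  ring

lemma zq_neg (m : ℤ) : zq q (-m) = - zq q m := by
  rw [zq, zq, neg_neg, ← neg_div, neg_sub]

lemma zpow_ne_one (hq0 : q ≠ 0) (hq : ∀ m : ℕ, 0 < m → q ^ m ≠ 1)
    {m : ℤ} (hm : m ≠ 0) : q ^ m ≠ 1 := by
  intro h
  have key : ∀ n : ℕ, 0 < n → q ^ (n : ℤ) ≠ 1 := by
    intro n hn hh
    exact hq n hn (by rw [← zpow_natCast q n]; exact hh)
  rcases lt_or_gt_of_ne hm with hneg | hpos
  · have : q ^ (-m) = 1 := by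
      rw [zpow_neg, h, inv_one]
    have h1 : (0:ℤ) < -m := by omega
    have := key (-m).toNat (by omega)
    rw [Int.toNat_of_nonneg (by omega)] at this
    exact this ‹q ^ (-m) = 1›
  · have := key m.toNat (by omega)
    rw [Int.toNat_of_nonneg (by omega)] at this
    exact this h

lemma zq_ne (hq0 : q ≠ 0) (hq : ∀ m : ℕ, 0 < m → q ^ m ≠ 1)
    {m : ℤ} (hm : m ≠ 0) : zq q m ≠ 0 := by
  have hden : q - q⁻¹ ≠ 0 := by
    intro h
    have : q ^ (2:ℤ) = 1 := by
      have hq2 : q * q = 1 := by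
        have := sub_eq_zero.mp h
        field_simp at this
        linear_combination this
      rw [zpow_two]; exact hq2
    exact zpow_ne_one hq0 hq (by norm_num) this
  have hnum : q ^ m - q ^ (-m) ≠ 0 := by
    intro h
    have : q ^ (2*m) = 1 := by
      have h2 : q ^ m = q ^ (-m) := sub_eq_zero.mp h
      have : q ^ m * q ^ m = q ^ (-m) * q ^ m := by rw [h2]
      rw [← zpow_add₀ hq0, ← zpow_add₀ hq0] at this
      simpa [two_mul] using this
    exact zpow_ne_one hq0 hq (by omega) this
  exact div_ne_zero hnum hden

lemma qnum_int (hq0 : q ≠ 0) (m : ℤ) : qnum q (m : ℂ) = zq q m := by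
  rw [qnum, zq, ← Complex.cpow_intCast q m, ← Complex.cpow_intCast q (-m)]
  push_cast
  ring_nf

lemma qpoch_int (hq0 : q ≠ 0) (m : ℤ) (n : ℕ) : qpoch q (m : ℂ) n = zpoch q m n := by
  unfold qpoch zpoch
  refine Finset.prod_congr rfl fun s _ => ?_
  rw [show ((m:ℂ) + s) = ((m + (s:ℤ) : ℤ) : ℂ) by push_cast; ring]
  exact qnum_int hq0 _

lemma qfact_eq (hq0 : q ≠ 0) (n : ℕ) : qfact q n = zfact q n := by
  unfold qfact zfact
  refine Finset.prod_congr rfl fun s _ => ?_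
  rw [show ((s:ℂ) + 1) = (((s:ℤ) + 1 : ℤ) : ℂ) by push_cast; ring]
  exact qnum_int hq0 _

lemma zfact_succ (n : ℕ) : zfact q (n+1) = zfact q n * zq q ((n:ℤ)+1) :=
  Finset.prod_range_succ _ n

lemma zfact_ne (hq0 : q ≠ 0) (hq : ∀ m : ℕ, 0 < m → q ^ m ≠ 1) (n : ℕ) :
    zfact q n ≠ 0 :=
  Finset.prod_ne_zero_iff.mpr fun s _ => zq_ne hq0 hq (by omega)

lemma zpoch_succ (x : ℤ) (n : ℕ) : zpoch q x (n+1) = zpoch q x n * zq q (x + n) :=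
  Finset.prod_range_succ _ n

lemma zpoch_succ' (x : ℤ) (n : ℕ) : zpoch q x (n+1) = zq q x * zpoch q (x+1) n := by
  rw [zpoch, zpoch, Finset.prod_range_succ']
  simp only [Nat.cast_zero, add_zero, mul_comm]
  congr 1
  refine Finset.prod_congr rfl fun s _ => ?_
  congr 1
  push_cast
  ring

end QJ
namespace QJ
variable {q : ℂ}

def bb (q : ℂ) (N l : ℕ) : ℂ := if l ≤ N then qbinom q N l else 0

def P (q : ℂ) (m : ℕ) : Polynomial ℂ :=
  ∏ s ∈ Finset.range m, (1 - Polynomial.C (q ^ (-2 * (s : ℤ))) * Polynomial.X)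

def G (q : ℂ) (N i : ℕ) : Polynomial ℂ :=
  ∑ l ∈ Finset.range (N + 1),
    Polynomial.C (bb q N l * q ^ (((i:ℤ) - l) * ((N:ℤ) - l)) * zpoch q (-(l:ℤ)) i)
      * Polynomial.X ^ l * P q (N - l)

lemma qfact_zero : qfact q 0 = 1 := by simp [qfact]

lemma bb_le {N l : ℕ} (h : l ≤ N) : bb q N l = qbinom q N l := if_pos h
lemma bb_gt {N l : ℕ} (h : N < l) : bb q N l = 0 := if_neg (by omega)

lemma bb_zero (hq0 : q ≠ 0) (hq : ∀ m : ℕ, 0 < m → q ^ m ≠ 1) (n : ℕ) :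
    bb q n 0 = 1 := by
  rw [bb_le (Nat.zero_le n), qbinom, qfact_zero, one_mul, Nat.sub_zero, qfact_eq hq0,
    div_self (zfact_ne hq0 hq n)]

lemma bb_self (hq0 : q ≠ 0) (hq : ∀ m : ℕ, 0 < m → q ^ m ≠ 1) (n : ℕ) :
    bb q n n = 1 := by
  rw [bb_le le_rfl, qbinom, Nat.sub_self, qfact_zero, mul_one, qfact_eq hq0,
    div_self (zfact_ne hq0 hq n)]

lemma zpow_split (hq0 : q ≠ 0) {e1 e2 e3 : ℤ} (h : e1 = e2 + e3) :
    q ^ e1 = q ^ e2 * q ^ e3 := by rw [h, zpow_add₀ hq0]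

lemma pascal_core (F L D ZL ZD v w : ℂ) (hL : L ≠ 0) (hD : D ≠ 0)
    (hZL : ZL ≠ 0) (hZD : ZD ≠ 0) :
    F * (v * ZD + w * ZL) / ((L * ZL) * (D * ZD))
      = v * (F / ((L * ZL) * D)) + w * (F / (L * (D * ZD))) := by
  field_simp

lemma bb_pascal (hq0 : q ≠ 0) (hq : ∀ m : ℕ, 0 < m → q ^ m ≠ 1) {N l : ℕ} (h : l ≤ N) :
    bb q (N+1) (l+1)
      = q ^ ((l:ℤ)+1) * bb q N (l+1) + q ^ (-((N:ℤ) - l)) * bb q N l := by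
  rcases eq_or_lt_of_le h with rfl | hlt
  · rw [bb_self hq0 hq, bb_gt (by omega), bb_self hq0 hq]
    simp
  · obtain ⟨d, rfl⟩ : ∃ d, N = l + (d + 1) := ⟨N - l - 1, by omega⟩
    rw [bb_le (by omega), bb_le (by omega), bb_le (by omega)]
    unfold qbinom
    simp only [qfact_eq hq0]
    have e1 : l + (d+1) + 1 - (l+1) = d + 1 := by omega
    have e2 : l + (d+1) - (l+1) = d := by omega
    have e3 : l + (d+1) - l = d + 1 := by omega
    rw [e1, e2, e3, zfact_succ, zfact_succ, zfact_succ]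
    have hsplit : zq q ((↑(l + (d + 1)):ℤ) + 1)
        = q ^ ((l:ℤ)+1) * zq q ((d:ℤ)+1) + q ^ (-((d:ℤ)+1)) * zq q ((l:ℤ)+1) := by
      rw [← zq_add hq0]
      congr 1; push_cast; ring
    rw [show -((↑(l + (d+1)):ℤ) - (l:ℤ)) = -((d:ℤ)+1) by push_cast; ring, hsplit]
    exact pascal_core _ _ _ _ _ _ _ (zfact_ne hq0 hq l) (zfact_ne hq0 hq d)
      (zq_ne hq0 hq (by omega)) (zq_ne hq0 hq (by omega))

lemma keyD (hq0 : q ≠ 0) (l j : ℕ) :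
    zpoch q (-(l:ℤ)-1) (j+1) - q ^ ((j:ℤ)+1) * zpoch q (-(l:ℤ)) (j+1)
      = -(zq q ((j:ℤ)+1) * q ^ ((j:ℤ)-(l:ℤ))) * zpoch q (-(l:ℤ)) j := by
  rw [zpoch_succ' , zpoch_succ, show (-(l:ℤ)-1)+1 = -(l:ℤ) by ring]
  have hsplit : zq q (-(l:ℤ) + (j:ℤ))
      = q ^ (-(l:ℤ)-1) * zq q ((j:ℤ)+1) + q ^ (-((j:ℤ)+1)) * zq q (-(l:ℤ)-1) := by
    rw [← zq_add hq0]
    congr 1; ring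
  rw [hsplit,
    show q ^ ((j:ℤ)-(l:ℤ)) = q ^ ((j:ℤ)+1) * q ^ (-(l:ℤ)-1) from zpow_split hq0 (by ring),
    zpow_neg]
  have hu : q ^ ((j:ℤ)+1) ≠ 0 := zpow_ne_zero _ hq0
  field_simp
  ring

end QJ
namespace QJ
variable {q : ℂ}

def AA (q : ℂ) (N i l : ℕ) : Polynomial ℂ :=
  Polynomial.C (q ^ (l:ℤ) * bb q N l * q ^ (((i:ℤ)-(l:ℤ))*(((N:ℤ)+1)-(l:ℤ)))
      * zpoch q (-(l:ℤ)) i) * Polynomial.X ^ l * P q (N+1-l)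

def BB (q : ℂ) (N i l : ℕ) : Polynomial ℂ :=
  Polynomial.C (q ^ (-((N:ℤ)-(l:ℤ))) * bb q N l * q ^ (((i:ℤ)-(l:ℤ)-1)*((N:ℤ)-(l:ℤ)))
      * zpoch q (-(l:ℤ)-1) i) * Polynomial.X ^ (l+1) * P q (N-l)

lemma zpoch_zero' (x : ℤ) : zpoch q x 0 = 1 := by simp [zpoch]

lemma P_succ (m : ℕ) :
    P q (m+1) = P q m * (1 - Polynomial.C (q ^ (-2 * (m:ℤ))) * Polynomial.X) :=
  Finset.prod_range_succ _ m

lemma body_eq (hq0 : q ≠ 0) (hq : ∀ m : ℕ, 0 < m → q ^ m ≠ 1) {N i l : ℕ} (hl : l ≤ N) :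
    Polynomial.C (bb q (N+1) (l+1)
        * q ^ (((i:ℤ) - (↑(l+1):ℤ)) * ((↑(N+1):ℤ) - (↑(l+1):ℤ))) * zpoch q (-(↑(l+1):ℤ)) i)
      * Polynomial.X ^ (l+1) * P q (N+1 - (l+1))
      = AA q N i (l+1) + BB q N i l := by
  have hidx : N + 1 - (l + 1) = N - l := by omega
  rw [hidx, AA, BB]
  rw [bb_pascal hq0 hq hl]
  push_cast
  rw [show (N:ℤ) + 1 - (↑l + 1) = (N:ℤ) - ↑l by ring]
  rw [show ((i:ℤ) - (↑l + 1)) * ((N:ℤ) - ↑l) = ((i:ℤ) - ↑l - 1) * ((N:ℤ) - ↑l) by ring]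
  rw [show (-(↑l + 1) : ℤ) = -(l:ℤ) - 1 by ring]
  simp only [Polynomial.C_mul, Polynomial.C_add]
  ring

lemma AA_zero_eq (hq0 : q ≠ 0) (hq : ∀ m : ℕ, 0 < m → q ^ m ≠ 1) (N i : ℕ) :
    Polynomial.C (bb q (N+1) 0
        * q ^ (((i:ℤ) - (↑(0:ℕ):ℤ)) * ((↑(N+1):ℤ) - (↑(0:ℕ):ℤ))) * zpoch q (-(↑(0:ℕ):ℤ)) i)
      * Polynomial.X ^ 0 * P q (N+1 - 0)
      = AA q N i 0 := by
  rw [AA, bb_zero hq0 hq, bb_zero hq0 hq]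
  push_cast
  norm_num

lemma AA_top (N i : ℕ) : AA q N i (N+1) = 0 := by
  rw [AA, bb_gt (by omega)]
  simp

lemma AA_BB_eq (hq0 : q ≠ 0) {N i l : ℕ} (hl : l ≤ N) :
    AA q N i l + BB q N i l
      = Polynomial.C (q ^ (i:ℤ))
          * (Polynomial.C (bb q N l * q ^ (((i:ℤ) - (l:ℤ)) * ((N:ℤ) - (l:ℤ)))
              * zpoch q (-(l:ℤ)) i) * Polynomial.X ^ l * P q (N - l))
        + Polynomial.C (bb q N l
            * q ^ (((i:ℤ)-(l:ℤ))*((N:ℤ)-(l:ℤ)) - 2*((N:ℤ)-(l:ℤ)))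
            * (zpoch q (-(l:ℤ)-1) i - q ^ (i:ℤ) * zpoch q (-(l:ℤ)) i))
          * Polynomial.X ^ (l+1) * P q (N-l) := by
  have hidx : N + 1 - l = (N - l) + 1 := by omega
  rw [AA, BB, hidx, P_succ]
  have hc : ((N - l : ℕ) : ℤ) = (N:ℤ) - (l:ℤ) := by omega
  rw [hc]
  rw [zpow_split hq0
    (show ((i:ℤ)-(l:ℤ))*(((N:ℤ)+1)-(l:ℤ))
        = ((i:ℤ)-(l:ℤ))*((N:ℤ)-(l:ℤ)) + ((i:ℤ)-(l:ℤ)) by ring)]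
  rw [zpow_split hq0 (show (i:ℤ) = ((i:ℤ)-(l:ℤ)) + (l:ℤ) by ring)]
  rw [zpow_split hq0
    (show ((i:ℤ)-(l:ℤ)-1)*((N:ℤ)-(l:ℤ))
        = ((i:ℤ)-(l:ℤ))*((N:ℤ)-(l:ℤ)) + (-((N:ℤ)-(l:ℤ))) by ring)]
  rw [zpow_split hq0
    (show ((i:ℤ)-(l:ℤ))*((N:ℤ)-(l:ℤ)) - 2*((N:ℤ)-(l:ℤ))
        = ((i:ℤ)-(l:ℤ))*((N:ℤ)-(l:ℤ)) + (-((N:ℤ)-(l:ℤ)) + -((N:ℤ)-(l:ℤ))) by ring)]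
  rw [zpow_split hq0
    (show -((N:ℤ)-(l:ℤ)) + -((N:ℤ)-(l:ℤ)) = (-((N:ℤ)-(l:ℤ))) + (-((N:ℤ)-(l:ℤ))) from rfl)]
  rw [zpow_split hq0 (show (-2) * ((N:ℤ)-(l:ℤ)) = (-((N:ℤ)-(l:ℤ))) + (-((N:ℤ)-(l:ℤ))) by ring)]
  simp only [Polynomial.C_mul, Polynomial.C_sub]
  ring

lemma G_succ (hq0 : q ≠ 0) (hq : ∀ m : ℕ, 0 < m → q ^ m ≠ 1) (N i : ℕ) :
    G q (N+1) i = Polynomial.C (q ^ (i:ℤ)) * G q N i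
      + ∑ l ∈ Finset.range (N+1),
          Polynomial.C (bb q N l
              * q ^ (((i:ℤ)-(l:ℤ))*((N:ℤ)-(l:ℤ)) - 2*((N:ℤ)-(l:ℤ)))
              * (zpoch q (-(l:ℤ)-1) i - q ^ (i:ℤ) * zpoch q (-(l:ℤ)) i))
            * Polynomial.X ^ (l+1) * P q (N-l) := by
  have h1 : G q (N+1) i
      = (∑ l ∈ Finset.range (N+1), (AA q N i (l+1) + BB q N i l)) + AA q N i 0 := by
    rw [G, Finset.sum_range_succ']
    refine congrArg₂ (· + ·) ?_ ?_
    · refine Finset.sum_congr rfl fun l hl => ?_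
      exact body_eq hq0 hq (by have := Finset.mem_range.mp hl; omega)
    · exact AA_zero_eq hq0 hq N i
  rw [h1, Finset.sum_add_distrib]
  have h2 : (∑ l ∈ Finset.range (N+1), AA q N i (l+1)) + AA q N i 0
      = ∑ l ∈ Finset.range (N+1), AA q N i l := by
    rw [← Finset.sum_range_succ' (AA q N i) (N+1), Finset.sum_range_succ, AA_top, add_zero]
  have h3 : (∑ l ∈ Finset.range (N+1), AA q N i l) + ∑ l ∈ Finset.range (N+1), BB q N i l
      = ∑ l ∈ Finset.range (N+1), (AA q N i l + BB q N i l) := by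
    rw [Finset.sum_add_distrib]
  calc (∑ l ∈ Finset.range (N+1), AA q N i (l+1))
        + (∑ l ∈ Finset.range (N+1), BB q N i l) + AA q N i 0
      = (∑ l ∈ Finset.range (N+1), AA q N i l) + ∑ l ∈ Finset.range (N+1), BB q N i l := by
        rw [← h2]; ring
    _ = ∑ l ∈ Finset.range (N+1), (AA q N i l + BB q N i l) := h3
    _ = _ := by
        rw [G, Finset.mul_sum, ← Finset.sum_add_distrib]
        refine Finset.sum_congr rfl fun l hl => ?_
        exact AA_BB_eq hq0 (by have := Finset.mem_range.mp hl; omega)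

end QJ
namespace QJ
variable {q : ℂ}

lemma zpoch_zero_left (j : ℕ) : zpoch q 0 (j+1) = 0 := by
  rw [zpoch_succ']
  simp [zq_zero]

lemma G_zero_succ (hq0 : q ≠ 0) (hq : ∀ m : ℕ, 0 < m → q ^ m ≠ 1) (N : ℕ) :
    G q (N+1) 0 = G q N 0 := by
  rw [G_succ hq0 hq]
  simp [zpoch_zero']

lemma G_pos_succ (hq0 : q ≠ 0) (hq : ∀ m : ℕ, 0 < m → q ^ m ≠ 1) (N j : ℕ) :
    G q (N+1) (j+1) = Polynomial.C (q ^ ((j:ℤ)+1)) * G q N (j+1)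
      - Polynomial.C (zq q ((j:ℤ)+1) * q ^ ((j:ℤ)-(N:ℤ))) * Polynomial.X * G q N j := by
  rw [G_succ hq0 hq]
  have hcast : ((j+1 : ℕ) : ℤ) = (j:ℤ) + 1 := by push_cast; ring
  rw [hcast]
  have hsum : ∑ l ∈ Finset.range (N+1),
      Polynomial.C (bb q N l
          * q ^ ((((j:ℤ)+1)-(l:ℤ))*((N:ℤ)-(l:ℤ)) - 2*((N:ℤ)-(l:ℤ)))
          * (zpoch q (-(l:ℤ)-1) (j+1) - q ^ ((j:ℤ)+1) * zpoch q (-(l:ℤ)) (j+1)))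
        * Polynomial.X ^ (l+1) * P q (N-l)
      = - (Polynomial.C (zq q ((j:ℤ)+1) * q ^ ((j:ℤ)-(N:ℤ))) * Polynomial.X * G q N j) := by
    rw [G, Finset.mul_sum, ← Finset.sum_neg_distrib]
    refine Finset.sum_congr rfl fun l hl => ?_
    rw [keyD hq0 l j]
    rw [zpow_split hq0
      (show (((j:ℤ)+1)-(l:ℤ))*((N:ℤ)-(l:ℤ)) - 2*((N:ℤ)-(l:ℤ))
          = ((j:ℤ)-(l:ℤ))*((N:ℤ)-(l:ℤ)) + (-((N:ℤ)-(l:ℤ))) by ring)]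
    rw [zpow_split hq0 (show (j:ℤ)-(N:ℤ) = ((j:ℤ)-(l:ℤ)) + (-((N:ℤ)-(l:ℤ))) by ring)]
    simp only [Polynomial.C_mul, Polynomial.C_neg]
    ring
  rw [hsum]
  ring

lemma KL (hq0 : q ≠ 0) (hq : ∀ m : ℕ, 0 < m → q ^ m ≠ 1) (N : ℕ) : ∀ i : ℕ,
    G q N i = Polynomial.C (zpoch q (-(N:ℤ)) i) * Polynomial.X ^ i := by
  induction N with
  | zero =>
    intro i
    rw [G, Finset.sum_range_one, bb_zero hq0 hq]
    cases i with
    | zero => simp [zpoch_zero', P]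
    | succ j =>
      have h1 : zpoch q (-((0:ℕ):ℤ)) (j+1) = 0 := by
        rw [show (-((0:ℕ):ℤ)) = 0 by norm_num]
        exact zpoch_zero_left j
      rw [h1]
      simp
  | succ N ih =>
    intro i
    cases i with
    | zero =>
      rw [G_zero_succ hq0 hq, ih 0]
      simp [zpoch_zero']
    | succ j =>
      rw [G_pos_succ hq0 hq N j, ih (j+1), ih j]
      have hs : zpoch q (-((N+1:ℕ):ℤ)) (j+1)
          = q ^ ((j:ℤ)+1) * zpoch q (-(N:ℤ)) (j+1)
            - zq q ((j:ℤ)+1) * q ^ ((j:ℤ)-(N:ℤ)) * zpoch q (-(N:ℤ)) j := by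
        rw [show (-((N+1:ℕ):ℤ)) = -(N:ℤ)-1 by push_cast; ring]
        rw [zpoch_succ', show (-(N:ℤ)-1)+1 = -(N:ℤ) by ring, zpoch_succ]
        have hsplit : zq q (-(N:ℤ) + (j:ℤ))
            = q ^ (-(N:ℤ)-1) * zq q ((j:ℤ)+1) + q ^ (-((j:ℤ)+1)) * zq q (-(N:ℤ)-1) := by
          rw [← zq_add hq0]
          congr 1; ring
        rw [hsplit,
          zpow_split hq0 (show (j:ℤ)-(N:ℤ) = ((j:ℤ)+1) + (-(N:ℤ)-1) by ring), zpow_neg]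
        have hu : q ^ ((j:ℤ)+1) ≠ 0 := zpow_ne_zero _ hq0
        field_simp
        ring
      rw [hs]
      simp only [Polynomial.C_mul, Polynomial.C_sub]
      ring

end QJ
namespace QJ
variable {q : ℂ}

lemma neg_poch (hq0 : q ≠ 0) (hq : ∀ m : ℕ, 0 < m → q ^ m ≠ 1) {k : ℕ} :
    ∀ {i : ℕ}, i ≤ k → zpoch q (-(k:ℤ)) i * zfact q (k-i) = (-1)^i * zfact q k := by
  intro i
  induction i with
  | zero => intro _; simp [zpoch_zero', zfact]
  | succ j ihj =>
    intro hjk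
    have hj : j ≤ k := by omega
    have hzq : zq q (-(k:ℤ) + (j:ℤ)) = - zq q ((↑(k - (j+1)):ℤ) + 1) := by
      rw [show (-(k:ℤ) + (j:ℤ)) = -(((↑(k - (j+1)):ℤ)) + 1) by omega, zq_neg]
    have hzf : zfact q (k - j) = zfact q (k-(j+1)) * zq q ((↑(k - (j+1)):ℤ)+1) := by
      rw [show k - j = (k - (j+1)) + 1 by omega]
      exact zfact_succ _
    have h := ihj hj
    rw [hzf] at h
    rw [zpoch_succ, hzq, pow_succ]
    linear_combination -h

lemma termB (hq0 : q ≠ 0) {N k i l : ℕ} (hl : l ≤ N) (a b : ℂ) :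
    Polynomial.C (qbinom q N l * q ^ (-((l:ℤ)*((N:ℤ)-(l:ℤ))))
        * (qbinom q k i * q ^ ((i:ℂ)*(b+1+(N:ℂ)-(l:ℂ))) * (-1)^i * qpoch q ((k:ℂ)+a+b+1) i
            * qpoch q (-(l:ℂ)) i / (qpoch q (a+1) i * qpoch q (-(N:ℂ)) i)))
      * P q (N-l) * Polynomial.X ^ l
    = Polynomial.C (qbinom q k i * q ^ ((i:ℂ)*(b+1)) * (-1)^i * qpoch q ((k:ℂ)+a+b+1) i
          / (qpoch q (a+1) i * zpoch q (-(N:ℤ)) i))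
      * (Polynomial.C (bb q N l * q ^ (((i:ℤ)-(l:ℤ))*((N:ℤ)-(l:ℤ))) * zpoch q (-(l:ℤ)) i)
          * Polynomial.X ^ l * P q (N-l)) := by
  have hs : qbinom q N l * q ^ (-((l:ℤ)*((N:ℤ)-(l:ℤ))))
        * (qbinom q k i * q ^ ((i:ℂ)*(b+1+(N:ℂ)-(l:ℂ))) * (-1)^i * qpoch q ((k:ℂ)+a+b+1) i
            * qpoch q (-(l:ℂ)) i / (qpoch q (a+1) i * qpoch q (-(N:ℂ)) i))
      = (qbinom q k i * q ^ ((i:ℂ)*(b+1)) * (-1)^i * qpoch q ((k:ℂ)+a+b+1) i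
            / (qpoch q (a+1) i * zpoch q (-(N:ℤ)) i))
        * (bb q N l * q ^ (((i:ℤ)-(l:ℤ))*((N:ℤ)-(l:ℤ))) * zpoch q (-(l:ℤ)) i) := by
    rw [show (i:ℂ)*(b+1+(N:ℂ)-(l:ℂ))
          = (i:ℂ)*(b+1) + (((i:ℤ)*((N:ℤ)-(l:ℤ)) : ℤ) : ℂ) by push_cast; ring]
    rw [Complex.cpow_add _ _ hq0, Complex.cpow_intCast]
    rw [show -(l:ℂ) = ((-(l:ℤ) : ℤ) : ℂ) by push_cast; ring, qpoch_int hq0]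
    rw [show -(N:ℂ) = ((-(N:ℤ) : ℤ) : ℂ) by push_cast; ring, qpoch_int hq0]
    rw [← bb_le hl]
    rw [zpow_split hq0 (show ((i:ℤ)-(l:ℤ))*((N:ℤ)-(l:ℤ))
          = (i:ℤ)*((N:ℤ)-(l:ℤ)) + (-((l:ℤ)*((N:ℤ)-(l:ℤ)))) by ring)]
    ring
  rw [hs, Polynomial.C_mul]
  ring

lemma stepC (hq0 : q ≠ 0) (hq : ∀ m : ℕ, 0 < m → q ^ m ≠ 1)
    {k N i : ℕ} (hik : i ≤ k) (hiN : i ≤ N) (a b : ℂ) :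
    (qbinom q k i * q ^ ((i:ℂ)*(b+1)) * (-1)^i * qpoch q ((k:ℂ)+a+b+1) i
        / (qpoch q (a+1) i * zpoch q (-(N:ℤ)) i)) * zpoch q (-(N:ℤ)) i
    = qpoch q (-(k:ℂ)) i * qpoch q ((k:ℂ)+a+b+1) i * q ^ ((i:ℂ)*(b+1))
        / (qpoch q (a+1) i * qfact q i) := by
  have hZ : zpoch q (-(N:ℤ)) i ≠ 0 := by
    refine Finset.prod_ne_zero_iff.mpr fun s hs => ?_
    have := Finset.mem_range.mp hs
    exact zq_ne hq0 hq (by omega)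
  have hFi : zfact q i ≠ 0 := zfact_ne hq0 hq i
  have hFki : zfact q (k-i) ≠ 0 := zfact_ne hq0 hq _
  have hnp : zpoch q (-(k:ℤ)) i = (-1)^i * zfact q k / zfact q (k-i) := by
    rw [eq_div_iff hFki]
    exact neg_poch hq0 hq hik
  rw [show -(k:ℂ) = ((-(k:ℤ) : ℤ) : ℂ) by push_cast; ring, qpoch_int hq0, hnp,
    qfact_eq hq0, qbinom, qfact_eq hq0, qfact_eq hq0, qfact_eq hq0]
  rcases eq_or_ne (qpoch q (a+1) i) 0 with hD | hD
  · simp [hD]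
  · field_simp

end QJ

/-- **Little q-Jacobi polynomials expanded via q-Hahn polynomials** (formula (4.2)):
for every N ≥ k, with α = λ−1, β = λ'−1,
j_k^{λ−1,λ'−1}(X) = Σ_{l=0}^N [N choose l] q^{−l(N−l)} Q_k^{(N)}(q^{−2l})
∏_{s=0}^{N−l−1}(1−q^{−2s}X) · X^l. -/
theorem jlittle_qHahn_expansion (q : ℂ) (hq0 : q ≠ 0)
    (hq : ∀ m : ℕ, 0 < m → q ^ m ≠ 1)
    (lam lam' : ℂ) (hl : ∀ m : ℤ, lam ≠ (m : ℂ)) (hl' : ∀ m : ℤ, lam' ≠ (m : ℂ))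
    (hll : ∀ m : ℤ, lam + lam' ≠ (m : ℂ)) (N k : ℕ) (hkN : k ≤ N) :
    jlittle q (lam - 1) (lam' - 1) k
      = ∑ l ∈ Finset.range (N + 1),
          Polynomial.C (qbinom q N l * q ^ (-((l : ℤ) * ((N : ℤ) - (l : ℤ))))
              * qHahn q (lam - 1) (lam' - 1) N k l)
            * (∏ s ∈ Finset.range (N - l),
                (1 - Polynomial.C (q ^ (-2 * (s : ℤ))) * Polynomial.X))
            * Polynomial.X ^ l := by
  have hPdef : ∀ m : ℕ,
      (∏ s ∈ Finset.range m, (1 - Polynomial.C (q ^ (-2 * (s:ℤ))) * Polynomial.X))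
        = QJ.P q m := fun _ => rfl
  simp only [hPdef]
  symm
  calc
    ∑ l ∈ Finset.range (N + 1),
        Polynomial.C (qbinom q N l * q ^ (-((l : ℤ) * ((N : ℤ) - (l : ℤ))))
            * qHahn q (lam - 1) (lam' - 1) N k l)
          * QJ.P q (N - l) * Polynomial.X ^ l
      = ∑ l ∈ Finset.range (N + 1), ∑ i ∈ Finset.range (k + 1),
          Polynomial.C (qbinom q N l * q ^ (-((l : ℤ) * ((N : ℤ) - (l : ℤ))))
              * (qbinom q k i * q ^ ((i:ℂ)*((lam'-1)+1+(N:ℂ)-(l:ℂ))) * (-1)^i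
                  * qpoch q ((k:ℂ)+(lam-1)+(lam'-1)+1) i
                  * qpoch q (-(l:ℂ)) i
                  / (qpoch q ((lam-1)+1) i * qpoch q (-(N:ℂ)) i)))
            * QJ.P q (N - l) * Polynomial.X ^ l := by
        refine Finset.sum_congr rfl fun l _ => ?_
        rw [qHahn, Finset.mul_sum, map_sum, Finset.sum_mul, Finset.sum_mul]
    _ = ∑ i ∈ Finset.range (k + 1), ∑ l ∈ Finset.range (N + 1),
          Polynomial.C (qbinom q N l * q ^ (-((l : ℤ) * ((N : ℤ) - (l : ℤ))))
              * (qbinom q k i * q ^ ((i:ℂ)*((lam'-1)+1+(N:ℂ)-(l:ℂ))) * (-1)^i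
                  * qpoch q ((k:ℂ)+(lam-1)+(lam'-1)+1) i
                  * qpoch q (-(l:ℂ)) i
                  / (qpoch q ((lam-1)+1) i * qpoch q (-(N:ℂ)) i)))
            * QJ.P q (N - l) * Polynomial.X ^ l := Finset.sum_comm
    _ = ∑ i ∈ Finset.range (k + 1),
          Polynomial.C (qbinom q k i * q ^ ((i:ℂ)*((lam'-1)+1)) * (-1)^i
              * qpoch q ((k:ℂ)+(lam-1)+(lam'-1)+1) i
              / (qpoch q ((lam-1)+1) i * QJ.zpoch q (-(N:ℤ)) i))
            * QJ.G q N i := by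
        refine Finset.sum_congr rfl fun i _ => ?_
        rw [QJ.G, Finset.mul_sum]
        refine Finset.sum_congr rfl fun l hl2 => ?_
        have hlN : l ≤ N := by have := Finset.mem_range.mp hl2; omega
        exact QJ.termB hq0 hlN (lam - 1) (lam' - 1)
    _ = ∑ i ∈ Finset.range (k + 1),
          Polynomial.C ((qbinom q k i * q ^ ((i:ℂ)*((lam'-1)+1)) * (-1)^i
              * qpoch q ((k:ℂ)+(lam-1)+(lam'-1)+1) i
              / (qpoch q ((lam-1)+1) i * QJ.zpoch q (-(N:ℤ)) i))
            * QJ.zpoch q (-(N:ℤ)) i) * Polynomial.X ^ i := by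
        refine Finset.sum_congr rfl fun i _ => ?_
        rw [QJ.KL hq0 hq N i, Polynomial.C_mul]
        ring
    _ = jlittle q (lam - 1) (lam' - 1) k := by
        rw [jlittle]
        refine Finset.sum_congr rfl fun i hi => ?_
        have hik : i ≤ k := by have := Finset.mem_range.mp hi; omega
        rw [QJ.stepC hq0 hq hik (by omega) (lam - 1) (lam' - 1)]
end
end
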